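/- For every position of WAK there is a position of Arc-Kayles (a loopless weighted graph in which every vertex has weight 1) with the same Grundy value. -/

import Mathlib

/-- The minimum excludant of a set of naturals. -/
noncomputable def mex (s : Set ℕ) : ℕ := sInf {n | n ∉ s}

/-- The moves of Weighted Arc Kayles on a graph with edge relation `E` (loops allowed:
`E u u`) from the weight function `w`: choose an edge `(u,v)` with both endpoints of
positive weight and remove one counter from each endpoint (one counter in total from
the unique endpoint if `u = v` is a loop). -/
def wakMoves {V : Type*} [DecidableEq V] (E : V → V → Prop) (w : V → ℕ) :
    Set (V → ℕ) :=
  {w' | ∃ u v, E u v ∧ 0 < w u ∧ 0 < w v ∧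
    w' = fun x => w x - (if x = u ∨ x = v then 1 else 0)}

lemma wakMoves_sum_lt {V : Type*} [Fintype V] [DecidableEq V] (E : V → V → Prop)
    (w : V → ℕ) {w' : V → ℕ} (h : w' ∈ wakMoves E w) :
    ∑ x, w' x < ∑ x, w x := by
  obtain ⟨u, v, _, hu, _, rfl⟩ := h
  refine Finset.sum_lt_sum (fun i _ => Nat.sub_le _ _) ⟨u, Finset.mem_univ u, ?_⟩
  simp only [true_or, if_pos]
  omega

/-- The Grundy value of Weighted Arc Kayles on the graph with edge relation `E`
and weight function `w`: the mex of the Grundy values of the options. -/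
noncomputable def wakGrundy {V : Type*} [Fintype V] [DecidableEq V]
    (E : V → V → Prop) : (V → ℕ) → ℕ := fun w =>
  mex (Set.range fun w' : {w' // w' ∈ wakMoves E w} => wakGrundy E w'.1)
termination_by w => ∑ x, w x
decreasing_by exact wakMoves_sum_lt E _ w'.2

/- ----------- auxiliary development ----------- -/

section Blowup

variable {V : Type} [Fintype V] [DecidableEq V]

/-- sum of nat subtraction -/
lemma sum_tsub' {α : Type*} (s : Finset α) (f g : α → ℕ) (h : ∀ i ∈ s, g i ≤ f i) :
    ∑ i ∈ s, (f i - g i) = ∑ i ∈ s, f i - ∑ i ∈ s, g i := by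
  classical
  induction s using Finset.induction_on with
  | empty => simp
  | @insert a s hx ih =>
    have h1 : g a ≤ f a := h a (Finset.mem_insert_self a s)
    have h2 : ∀ i ∈ s, g i ≤ f i := fun i hi => h i (Finset.mem_insert_of_mem hi)
    have h3 : ∑ i ∈ s, g i ≤ ∑ i ∈ s, f i := Finset.sum_le_sum h2
    rw [Finset.sum_insert hx, Finset.sum_insert hx, Finset.sum_insert hx, ih h2]
    omega

/-- copies -/
abbrev Cop (w : V → ℕ) : Type := Σ u : V, Fin (w u)

/-- the blowup graph: copies (inl) with copy-copy edges for non-loop edges,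
and each copy has its own pendant (inr) when there is a loop -/
def blow (E : V → V → Prop) (hsymm : Symmetric E) (w : V → ℕ) :
    SimpleGraph (Cop w ⊕ Cop w) where
  Adj x y := match x, y with
    | .inl a, .inl b => E a.1 b.1 ∧ a.1 ≠ b.1
    | .inl a, .inr b => a = b ∧ E a.1 a.1
    | .inr a, .inl b => a = b ∧ E a.1 a.1
    | .inr _, .inr _ => False
  symm := by
    constructor
    rintro (a | a) (b | b) h
    · exact ⟨hsymm h.1, h.2.symm⟩
    · exact ⟨h.1.symm, h.1 ▸ h.2⟩
    · exact ⟨h.1.symm, h.1 ▸ h.2⟩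
    · exact h
  loopless := by
    constructor
    rintro (a | a) h
    · exact h.2 rfl
    · exact h

variable (w : V → ℕ)

/-- count of live copies -/
def cnt (f : Cop w ⊕ Cop w → ℕ) (u : V) : ℕ := ∑ i : Fin (w u), f (Sum.inl ⟨u, i⟩)

lemma sum_ind (a : Cop w) (u : V) :
    ∑ i : Fin (w u), (if (⟨u, i⟩ : Cop w) = a then 1 else 0) =
      if u = a.1 then 1 else 0 := by
  obtain ⟨v, j⟩ := a
  by_cases hu : u = v
  · subst hu
    simp only [if_pos rfl]
    have h : ∀ i : Fin (w u), ((⟨u, i⟩ : Cop w) = ⟨u, j⟩) = (i = j) := by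
      intro i
      simp [Sigma.ext_iff]
    simp only [h]
    simp
  · simp only [if_neg hu]
    refine Finset.sum_eq_zero fun i _ => ?_
    rw [if_neg]
    intro h
    exact hu (congrArg Sigma.fst h)

lemma cnt_sub_two (f : Cop w ⊕ Cop w → ℕ) (a b : Cop w) (hab : a.1 ≠ b.1)
    (ha : 0 < f (Sum.inl a)) (hb : 0 < f (Sum.inl b)) :
    cnt w (fun z => f z - if z = Sum.inl a ∨ z = Sum.inl b then 1 else 0) =
      fun u => cnt w f u - if u = a.1 ∨ u = b.1 then 1 else 0 := by
  funext u
  unfold cnt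
  have key : ∀ i : Fin (w u),
      (if (Sum.inl ⟨u, i⟩ : Cop w ⊕ Cop w) = Sum.inl a ∨ (Sum.inl ⟨u, i⟩ : Cop w ⊕ Cop w) = Sum.inl b then 1 else 0) =
      (if (⟨u, i⟩ : Cop w) = a then 1 else 0) + (if (⟨u, i⟩ : Cop w) = b then 1 else 0) := by
    intro i
    by_cases h1 : (⟨u, i⟩ : Cop w) = a <;> by_cases h2 : (⟨u, i⟩ : Cop w) = b
    · exact absurd (h1 ▸ h2 ▸ rfl : a.1 = b.1) hab
    all_goals
      have hab' : ¬ a = b := fun h => hab (congrArg Sigma.fst h)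
      have hab'' : ¬ b = a := fun h => hab' h.symm
      simp [Sum.inl.injEq, h1, h2, hab', hab'']
  have hle : ∀ i ∈ (Finset.univ : Finset (Fin (w u))),
      (if (Sum.inl ⟨u, i⟩ : Cop w ⊕ Cop w) = Sum.inl a ∨ (Sum.inl ⟨u, i⟩ : Cop w ⊕ Cop w) = Sum.inl b then 1 else 0) ≤ f (Sum.inl ⟨u, i⟩) := by
    intro i _
    split
    · rename_i h
      rcases h with h | h <;> rw [h] <;> omega
    · omega
  rw [sum_tsub' _ _ _ hle]
  congr 1
  rw [Finset.sum_congr rfl (fun i _ => key i), Finset.sum_add_distrib,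
    sum_ind, sum_ind]
  by_cases h1 : u = a.1 <;> by_cases h2 : u = b.1
  · exact absurd (h1 ▸ h2 ▸ rfl : a.1 = b.1) (by simpa using hab)
  · simp [h1, h2, hab]
  · simp [h1, h2]
    exact fun h => hab (Eq.symm h)
  · simp [h1, h2]

lemma cnt_sub_loop (f : Cop w ⊕ Cop w → ℕ) (a : Cop w)
    (ha : 0 < f (Sum.inl a)) :
    cnt w (fun z => f z - if z = Sum.inl a ∨ z = Sum.inr a then 1 else 0) =
      fun u => cnt w f u - if u = a.1 ∨ u = a.1 then 1 else 0 := by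
  funext u
  unfold cnt
  have key : ∀ i : Fin (w u),
      (if (Sum.inl ⟨u, i⟩ : Cop w ⊕ Cop w) = Sum.inl a ∨ (Sum.inl ⟨u, i⟩ : Cop w ⊕ Cop w) = Sum.inr a then 1 else 0) =
      (if (⟨u, i⟩ : Cop w) = a then 1 else 0) := by
    intro i
    simp [Sum.inl.injEq]
  have hle : ∀ i ∈ (Finset.univ : Finset (Fin (w u))),
      (if (Sum.inl ⟨u, i⟩ : Cop w ⊕ Cop w) = Sum.inl a ∨ (Sum.inl ⟨u, i⟩ : Cop w ⊕ Cop w) = Sum.inr a then 1 else 0) ≤ f (Sum.inl ⟨u, i⟩) := by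
    intro i _
    split
    · rename_i h
      rcases h with h | h
      · rw [h]; omega
      · exact absurd h (by simp)
    · omega
  rw [sum_tsub' _ _ _ hle]
  rw [Finset.sum_congr rfl (fun i _ => key i), sum_ind]
  simp only [or_self]

lemma exists_live {f : Cop w ⊕ Cop w → ℕ} {u : V} (h : 0 < cnt w f u) :
    ∃ i : Fin (w u), 0 < f (Sum.inl ⟨u, i⟩) := by
  by_contra hc
  push_neg at hc
  have : cnt w f u = 0 := Finset.sum_eq_zero fun i _ => Nat.le_zero.mp (hc i)
  omega

/-- the main lemma: the Grundy value of the blowup equals the Grundy value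
of the original. -/
lemma cnt_pos (f : Cop w ⊕ Cop w → ℕ) (a : Cop w) (h : 0 < f (Sum.inl a)) :
    0 < cnt w f a.1 :=
  lt_of_lt_of_le h (Finset.single_le_sum
    (f := fun i : Fin (w a.1) => f (Sum.inl ⟨a.1, i⟩))
    (fun _ _ => Nat.zero_le _) (Finset.mem_univ a.2))

lemma blow_grundy (E : V → V → Prop) (hsymm : Symmetric E) (w : V → ℕ) :
    ∀ n (f : Cop w ⊕ Cop w → ℕ), (∀ x, f x ≤ 1) →
      (∀ a, 0 < f (Sum.inl a) → 0 < f (Sum.inr a)) → ∑ x, f x = n →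
      wakGrundy (blow E hsymm w).Adj f = wakGrundy E (cnt w f) := by
  intro n
  induction n using Nat.strong_induction_on with
  | _ n ih =>
  intro f hf1 hf2 hn
  rw [wakGrundy, wakGrundy]
  unfold mex
  have hset : (Set.range fun f' : {f' // f' ∈ wakMoves (blow E hsymm w).Adj f} =>
        wakGrundy (blow E hsymm w).Adj f'.1)
      = (Set.range fun w' : {w' // w' ∈ wakMoves E (cnt w f)} => wakGrundy E w'.1) := by
    ext m
    simp only [Set.mem_range, Subtype.exists, exists_prop]
    constructor
    · rintro ⟨f', hf', rfl⟩
      obtain ⟨x, y, hxy, hx, hy, rfl⟩ := hf'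
      -- invariants of the new position
      rcases x with a | a <;> rcases y with b | b
      ·
        have hxy2 : E a.1 b.1 ∧ a.1 ≠ b.1 := hxy
        have hE := hxy2.1
        have hne := hxy2.2
        set f' : Cop w ⊕ Cop w → ℕ :=
          fun z => f z - if z = Sum.inl a ∨ z = Sum.inl b then 1 else 0 with hf'def
        have hmem : f' ∈ wakMoves (blow E hsymm w).Adj f :=
          ⟨Sum.inl a, Sum.inl b, hxy, hx, hy, rfl⟩
        have hlt : ∑ z, f' z < n := hn ▸ wakMoves_sum_lt _ f hmem
        have hinv1 : ∀ z, f' z ≤ 1 := fun z => le_trans (Nat.sub_le _ _) (hf1 z)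
        have hinv2 : ∀ c, 0 < f' (Sum.inl c) → 0 < f' (Sum.inr c) := by
          intro c hc
          have : 0 < f (Sum.inl c) := lt_of_lt_of_le hc (Nat.sub_le _ _)
          have h2 := hf2 c this
          simpa [hf'def] using h2
        have hih := ih _ hlt f' hinv1 hinv2 rfl
        refine ⟨cnt w f', ?_, hih ▸ rfl⟩
        rw [cnt_sub_two w f a b hne hx hy]
        exact ⟨a.1, b.1, hE, cnt_pos w f a hx, cnt_pos w f b hy, rfl⟩
      ·
        obtain ⟨rfl, hE⟩ : a = b ∧ E a.1 a.1 := hxy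
        set f' : Cop w ⊕ Cop w → ℕ :=
          fun z => f z - if z = Sum.inl a ∨ z = Sum.inr a then 1 else 0 with hf'def
        have hmem : f' ∈ wakMoves (blow E hsymm w).Adj f :=
          ⟨Sum.inl a, Sum.inr a, ⟨rfl, hE⟩, hx, hy, rfl⟩
        have hlt : ∑ z, f' z < n := hn ▸ wakMoves_sum_lt _ f hmem
        have hinv1 : ∀ z, f' z ≤ 1 := fun z => le_trans (Nat.sub_le _ _) (hf1 z)
        have hinv2 : ∀ c, 0 < f' (Sum.inl c) → 0 < f' (Sum.inr c) := by
          intro c hc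
          have hca : c ≠ a := by
            intro hceq
            rw [hceq] at hc
            simp only [hf'def, true_or, or_true, if_pos] at hc
            have := hf1 (Sum.inl a)
            omega
          have : 0 < f (Sum.inl c) := lt_of_lt_of_le hc (Nat.sub_le _ _)
          have h2 := hf2 c this
          simpa [hf'def, hca] using h2
        have hih := ih _ hlt f' hinv1 hinv2 rfl
        refine ⟨cnt w f', ?_, hih ▸ rfl⟩
        rw [cnt_sub_loop w f a hx]
        exact ⟨a.1, a.1, hE, cnt_pos w f a hx, cnt_pos w f a hx, rfl⟩
      ·
        obtain ⟨rfl, hE⟩ : a = b ∧ E a.1 a.1 := hxy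
        set f' : Cop w ⊕ Cop w → ℕ :=
          fun z => f z - if z = Sum.inr a ∨ z = Sum.inl a then 1 else 0 with hf'def
        have hswap : f' = fun z => f z - if z = Sum.inl a ∨ z = Sum.inr a then 1 else 0 := by
          funext z
          simp only [hf'def]
          congr 1
          simp [or_comm]
        have hmem : f' ∈ wakMoves (blow E hsymm w).Adj f :=
          ⟨Sum.inr a, Sum.inl a, ⟨rfl, hE⟩, hx, hy, rfl⟩
        have hlt : ∑ z, f' z < n := hn ▸ wakMoves_sum_lt _ f hmem
        have hinv1 : ∀ z, f' z ≤ 1 := fun z => le_trans (Nat.sub_le _ _) (hf1 z)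
        have hinv2 : ∀ c, 0 < f' (Sum.inl c) → 0 < f' (Sum.inr c) := by
          intro c hc
          have hca : c ≠ a := by
            intro hceq
            rw [hceq] at hc
            simp only [hf'def, true_or, or_true, if_pos] at hc
            have := hf1 (Sum.inl a)
            omega
          have : 0 < f (Sum.inl c) := lt_of_lt_of_le hc (Nat.sub_le _ _)
          have h2 := hf2 c this
          simpa [hf'def, hca] using h2
        have hih := ih _ hlt f' hinv1 hinv2 rfl
        refine ⟨cnt w f', ?_, hih ▸ rfl⟩
        rw [hswap, cnt_sub_loop w f a hy]
        exact ⟨a.1, a.1, hE, cnt_pos w f a hy, cnt_pos w f a hy, rfl⟩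
      · exact absurd hxy (by simp [blow])
    · rintro ⟨w', hw', rfl⟩
      obtain ⟨u, v, huv, hu, hv, rfl⟩ := hw'
      by_cases huv' : u = v
      · subst huv'
        obtain ⟨i, hi⟩ := exists_live w hu
        have hpend : 0 < f (Sum.inr ⟨u, i⟩) := hf2 _ hi
        set f' : Cop w ⊕ Cop w → ℕ :=
          fun z => f z - if z = Sum.inl ⟨u, i⟩ ∨ z = Sum.inr ⟨u, i⟩ then 1 else 0 with hf'def
        have hadj : (blow E hsymm w).Adj (Sum.inl ⟨u, i⟩) (Sum.inr ⟨u, i⟩) := ⟨rfl, huv⟩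
        have hmem : f' ∈ wakMoves (blow E hsymm w).Adj f :=
          ⟨Sum.inl ⟨u, i⟩, Sum.inr ⟨u, i⟩, hadj, hi, hpend, rfl⟩
        have hlt : ∑ z, f' z < n := hn ▸ wakMoves_sum_lt _ f hmem
        have hinv1 : ∀ z, f' z ≤ 1 := fun z => le_trans (Nat.sub_le _ _) (hf1 z)
        have hinv2 : ∀ c, 0 < f' (Sum.inl c) → 0 < f' (Sum.inr c) := by
          intro c hc
          have hca : c ≠ ⟨u, i⟩ := by
            intro hceq
            rw [hceq] at hc
            simp only [hf'def, true_or, or_true, if_pos] at hc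
            have := hf1 (Sum.inl ⟨u, i⟩)
            omega
          have : 0 < f (Sum.inl c) := lt_of_lt_of_le hc (Nat.sub_le _ _)
          have h2 := hf2 c this
          simpa [hf'def, hca] using h2
        have hih := ih _ hlt f' hinv1 hinv2 rfl
        refine ⟨f', hmem, ?_⟩
        rw [hih, cnt_sub_loop w f ⟨u, i⟩ hi]
      · obtain ⟨i, hi⟩ := exists_live w hu
        obtain ⟨j, hj⟩ := exists_live w hv
        set f' : Cop w ⊕ Cop w → ℕ :=
          fun z => f z - if z = Sum.inl ⟨u, i⟩ ∨ z = Sum.inl ⟨v, j⟩ then 1 else 0 with hf'def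
        have hadj : (blow E hsymm w).Adj (Sum.inl ⟨u, i⟩) (Sum.inl ⟨v, j⟩) := ⟨huv, huv'⟩
        have hmem : f' ∈ wakMoves (blow E hsymm w).Adj f :=
          ⟨Sum.inl ⟨u, i⟩, Sum.inl ⟨v, j⟩, hadj, hi, hj, rfl⟩
        have hlt : ∑ z, f' z < n := hn ▸ wakMoves_sum_lt _ f hmem
        have hinv1 : ∀ z, f' z ≤ 1 := fun z => le_trans (Nat.sub_le _ _) (hf1 z)
        have hinv2 : ∀ c, 0 < f' (Sum.inl c) → 0 < f' (Sum.inr c) := by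
          intro c hc
          have : 0 < f (Sum.inl c) := lt_of_lt_of_le hc (Nat.sub_le _ _)
          have h2 := hf2 c this
          simpa [hf'def] using h2
        have hih := ih _ hlt f' hinv1 hinv2 rfl
        refine ⟨f', hmem, ?_⟩
        rw [hih, cnt_sub_two w f ⟨u, i⟩ ⟨v, j⟩ huv' hi hj]
  rw [hset]

end Blowup

/-- Every WAK position has an Arc-Kayles position with the same Grundy value.
An Arc-Kayles position is WAK on a loopless simple graph in which every vertex has
weight `1`. -/
theorem wak_equiv_arcKayles {V : Type} [Fintype V] [DecidableEq V]
    (E : V → V → Prop) (hsymm : Symmetric E) (w : V → ℕ) :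
    ∃ (V' : Type) (hf : Fintype V') (hd : DecidableEq V') (G : SimpleGraph V'),
      @wakGrundy V' hf hd G.Adj (fun _ => 1) = wakGrundy E w := by
  refine ⟨Cop w ⊕ Cop w, inferInstance, inferInstance, blow E hsymm w, ?_⟩
  have := blow_grundy E hsymm w (∑ x : Cop w ⊕ Cop w, 1) (fun _ => 1)
    (fun _ => le_refl 1) (fun _ _ => one_pos) rfl
  rw [this]
  congr 1
  funext u
  simp [cnt]
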